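/- Top coefficients of the DAHA expansion: for every n ≥ 2, a_{n,n} = A_2 A_3 ⋯ A_n = ∏_{k=2}^{n} A_k, and a_{n,n−1} = (∏_{k=2}^{n−1} A_k)(A_1 − A_n). -/

import Mathlib

/- STATEMENT 2: Top coefficients of the DAHA expansion: for every n ≥ 2,
a_{n,n} = ∏_{k=2}^{n} A_k and a_{n,n−1} = (∏_{k=2}^{n−1} A_k)(A_1 − A_n). -/

noncomputable section

/-- The field `F = ℚ(q, t₁, t₂)` of rational functions in three indeterminates. -/
abbrev F : Type := FractionRing (MvPolynomial (Fin 3) ℚ)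

def q : F := algebraMap (MvPolynomial (Fin 3) ℚ) F (MvPolynomial.X 0)
def t1 : F := algebraMap (MvPolynomial (Fin 3) ℚ) F (MvPolynomial.X 1)
def t2 : F := algebraMap (MvPolynomial (Fin 3) ℚ) F (MvPolynomial.X 2)

/-- `A_p = (q^{2p−1}t₁^{−1} − q^{1−2p}t₁ + t₂ − t₂^{−1})/(q^{2p−1} − q^{1−2p})`. -/
def A (p : ℤ) : F :=
  (q ^ (2 * p - 1) * t1⁻¹ - q ^ (1 - 2 * p) * t1 + t2 - t2⁻¹) /
    (q ^ (2 * p - 1) - q ^ (1 - 2 * p))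

/-- The coefficients `a_{n,p}` defined by the DAHA recurrence. -/
def a : ℕ → ℤ → F
  | 0, _ => 0
  | 1, p => if p = 1 then 1 else if p = -1 then -1 else 0
  | n + 2, p =>
      A p * a (n + 1) (p - 1) + (A p - A (p + 1)) * a (n + 1) p
        + A (-p) * a (n + 1) (p + 1) - a n p

lemma a_vanish (n : ℕ) : ∀ p : ℤ, (n : ℤ) < p → a n p = 0 := by
  induction n using Nat.strong_induction_on with
  | _ n ih =>
    match n with
    | 0 => intro p _; rfl
    | 1 =>
      intro p hp
      simp only [a]
      rw [if_neg (by omega), if_neg (by omega)]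
    | n + 2 =>
      intro p hp
      have h1 : ((n : ℤ)) < p := by push_cast at hp ⊢; omega
      simp only [a]
      rw [ih (n + 1) (by omega) (p - 1) (by push_cast; push_cast at hp; omega),
        ih (n + 1) (by omega) p (by push_cast; push_cast at hp; omega),
        ih (n + 1) (by omega) (p + 1) (by push_cast; push_cast at hp; omega),
        ih n (by omega) p h1]
      ring

lemma Icc_succ (b : ℤ) (h : (1:ℤ) ≤ b) :
    Finset.Icc (2:ℤ) (b + 1) = insert (b + 1) (Finset.Icc (2:ℤ) b) := by
  ext x; simp [Finset.mem_Icc]; omega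

lemma prod_succ (b : ℤ) (h : (1:ℤ) ≤ b) :
    ∏ k ∈ Finset.Icc (2:ℤ) (b + 1), A k = (∏ k ∈ Finset.Icc (2:ℤ) b, A k) * A (b + 1) := by
  rw [Icc_succ b h, Finset.prod_insert (by simp)]
  ring

lemma a_top (n : ℕ) (hn : 1 ≤ n) :
    a n (n : ℤ) = ∏ k ∈ Finset.Icc (2 : ℤ) (n : ℤ), A k := by
  induction n, hn using Nat.le_induction with
  | base => simp [a, Finset.Icc_eq_empty_of_lt]
  | succ n hn ih =>
    obtain ⟨m, rfl⟩ : ∃ m, n = m + 1 := ⟨n - 1, by omega⟩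
    have e1 : ((m + 1 + 1 : ℕ) : ℤ) = (m : ℤ) + 2 := by push_cast; ring
    have e2 : ((m + 1 : ℕ) : ℤ) = (m : ℤ) + 1 := by push_cast; ring
    rw [e1]
    show A ((m:ℤ)+2) * a (m + 1) ((m:ℤ)+2 - 1) + (A ((m:ℤ)+2) - A ((m:ℤ)+2 + 1)) * a (m + 1) ((m:ℤ)+2)
        + A (-((m:ℤ)+2)) * a (m + 1) ((m:ℤ)+2 + 1) - a m ((m:ℤ)+2) = _
    rw [a_vanish (m+1) ((m:ℤ)+2) (by push_cast; omega),
      a_vanish (m+1) ((m:ℤ)+2+1) (by push_cast; omega),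
      a_vanish m ((m:ℤ)+2) (by omega)]
    have e3 : (m:ℤ) + 2 - 1 = ((m + 1 : ℕ) : ℤ) := by push_cast; ring
    rw [e3, ih, e2, show (m:ℤ)+2 = (m:ℤ)+1+1 by ring, prod_succ ((m:ℤ)+1) (by omega)]
    ring

lemma a_sub (n : ℕ) (hn : 2 ≤ n) :
    a n ((n : ℤ) - 1) = (∏ k ∈ Finset.Icc (2 : ℤ) ((n : ℤ) - 1), A k) * (A 1 - A (n : ℤ)) := by
  induction n, hn using Nat.le_induction with
  | base =>
    show A 1 * a 1 (1 - 1) + (A 1 - A (1 + 1)) * a 1 1 + A (-1) * a 1 (1 + 1) - a 0 1 = _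
    norm_num [a, Finset.Icc_eq_empty_of_lt]
  | succ n hn ih =>
    obtain ⟨m, rfl⟩ : ∃ m, n = m + 2 := ⟨n - 2, by omega⟩
    have e1 : ((m + 2 + 1 : ℕ) : ℤ) - 1 = (m : ℤ) + 2 := by push_cast; ring
    have e1' : ((m + 2 + 1 : ℕ) : ℤ) = (m : ℤ) + 3 := by push_cast; ring
    rw [e1, e1']
    show A ((m:ℤ)+2) * a (m + 2) ((m:ℤ)+2 - 1) + (A ((m:ℤ)+2) - A ((m:ℤ)+2 + 1)) * a (m + 2) ((m:ℤ)+2)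
        + A (-((m:ℤ)+2)) * a (m + 2) ((m:ℤ)+2 + 1) - a (m+1) ((m:ℤ)+2) = _
    have e2 : (m:ℤ) + 2 - 1 = ((m + 2 : ℕ) : ℤ) - 1 := by push_cast; ring
    have e2' : (m:ℤ) + 2 = ((m + 2 : ℕ) : ℤ) := by push_cast; ring
    rw [a_vanish (m+2) ((m:ℤ)+2+1) (by push_cast; omega),
      a_vanish (m+1) ((m:ℤ)+2) (by push_cast; omega),
      e2, ih]
    have htop := a_top (m + 2) (by omega)
    rw [← e2'] at htop
    rw [show ((m+2:ℕ):ℤ) = (m:ℤ)+2 from e2'.symm] at ih ⊢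
    rw [htop]
    have hp : ∏ k ∈ Finset.Icc (2:ℤ) ((m:ℤ)+2), A k
        = (∏ k ∈ Finset.Icc (2:ℤ) ((m:ℤ)+2-1), A k) * A ((m:ℤ)+2) := by
      have := prod_succ ((m:ℤ)+1) (by omega)
      rw [show (m:ℤ)+1+1 = (m:ℤ)+2 by ring] at this
      rw [this, show (m:ℤ)+2-1 = (m:ℤ)+1 by ring]
    rw [hp]
    ring

theorem top_coefficients (n : ℕ) (hn : 2 ≤ n) :
    a n (n : ℤ) = ∏ k ∈ Finset.Icc (2 : ℤ) (n : ℤ), A k ∧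
    a n ((n : ℤ) - 1) = (∏ k ∈ Finset.Icc (2 : ℤ) ((n : ℤ) - 1), A k) * (A 1 - A (n : ℤ)) := by
  exact ⟨a_top n (by omega), a_sub n hn⟩

end
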